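/- arXiv:2001.00643 — 2 statements merged into one kernel-verified Lean document; each statement's English description precedes it below -/
import Mathlib

section
/- Let G = (V,E) be a graph on N vertices with minimum degree at least N − N/8, whose edges are coloured with three colours. If the largest monochromatic component in G has fewer than 3N/4 vertices, then there exists a monochromatic component in a different colour from the largest one having at least N/2 vertices. -/
open SimpleGraph

/-- The subgraph of `G` spanned by the edges of colour `i` under the edge-colouring `c`. -/
def colourGraph {V : Type*} (G : SimpleGraph V) (c : Sym2 V → Fin 3) (i : Fin 3) :
    SimpleGraph V where
  Adj u v := G.Adj u v ∧ c s(u, v) = i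
  symm := ⟨fun u v h => ⟨h.1.symm, by rw [Sym2.eq_swap]; exact h.2⟩⟩
  loopless := ⟨fun v h => G.ne_of_adj h.1 rfl⟩

private lemma fin3_exists : ∀ i : Fin 3,
    ∃ j k : Fin 3, j ≠ i ∧ k ≠ i ∧ j ≠ k ∧ ∀ l : Fin 3, l = i ∨ l = j ∨ l = k := by decide

section aux

variable {N : ℕ} {G : SimpleGraph (Fin N)} {c : Sym2 (Fin N) → Fin 3}

private lemma cg_mk_eq {j : Fin 3} {u v : Fin N} (h : G.Adj u v) (hc : c s(u, v) = j) :
    (colourGraph G c j).connectedComponentMk u = (colourGraph G c j).connectedComponentMk v :=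
  SimpleGraph.ConnectedComponent.sound (SimpleGraph.Adj.reachable ⟨h, hc⟩)

private lemma nonnbr (hdeg : ∀ v, (N : ℝ) - (N : ℝ) / 8 ≤ (G.neighborSet v).ncard)
    (v : Fin N) (W : Set (Fin N)) (hvW : v ∉ W) :
    ((W \ G.neighborSet v).ncard : ℝ) ≤ (N : ℝ) / 8 - 1 := by
  have hsub : (W \ G.neighborSet v) ⊆ (insert v (G.neighborSet v))ᶜ := by
    intro x hx
    simp only [Set.mem_compl_iff, Set.mem_insert_iff, not_or]
    refine ⟨?_, hx.2⟩
    rintro rfl; exact hvW hx.1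
  have h1 : (W \ G.neighborSet v).ncard ≤ ((insert v (G.neighborSet v))ᶜ).ncard :=
    Set.ncard_le_ncard hsub (Set.toFinite _)
  have h2 : ((insert v (G.neighborSet v)) : Set (Fin N)).ncard
      + ((insert v (G.neighborSet v))ᶜ).ncard = N := by
    rw [Set.ncard_add_ncard_compl]
    simp [Nat.card_eq_fintype_card]
  have h3 : (insert v (G.neighborSet v)).ncard = (G.neighborSet v).ncard + 1 :=
    Set.ncard_insert_of_notMem (by simp) (Set.toFinite _)
  have h4 := hdeg v
  have h1' : ((W \ G.neighborSet v).ncard : ℝ) ≤ (((insert v (G.neighborSet v))ᶜ).ncard : ℝ) := by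
    exact_mod_cast h1
  have h2' : (((insert v (G.neighborSet v)) : Set (Fin N)).ncard : ℝ)
      + (((insert v (G.neighborSet v))ᶜ).ncard : ℝ) = N := by exact_mod_cast h2
  have h3' : (((insert v (G.neighborSet v)) : Set (Fin N)).ncard : ℝ)
      = ((G.neighborSet v).ncard : ℝ) + 1 := by exact_mod_cast h3
  linarith

/-- From the degree condition: a large part of any set is in any vertex's neighbourhood. -/
private lemma inter_nbr (hdeg : ∀ v, (N : ℝ) - (N : ℝ) / 8 ≤ (G.neighborSet v).ncard)
    (v : Fin N) (W : Set (Fin N)) (hvW : v ∉ W) :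
    (W.ncard : ℝ) - ((N : ℝ) / 8 - 1) ≤ ((W ∩ G.neighborSet v).ncard : ℝ) := by
  have h1 := nonnbr hdeg v W hvW
  have h2 : (W ∩ G.neighborSet v).ncard + (W \ G.neighborSet v).ncard = W.ncard :=
    Set.ncard_inter_add_ncard_diff_eq_ncard W _ (Set.toFinite _)
  have h2' : ((W ∩ G.neighborSet v).ncard : ℝ) + ((W \ G.neighborSet v).ncard : ℝ)
      = (W.ncard : ℝ) := by exact_mod_cast h2
  linarith

end aux
section aux2

variable {N : ℕ} {G : SimpleGraph (Fin N)} {c : Sym2 (Fin N) → Fin 3}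

/-- Master absorption lemma: if all edges between disjoint sets `P` and `Q` have colour `j`,
`P` is larger than `2(N/8 - 1)` and `Q` is larger than `N/8 - 1`, then some component of
colour `j` contains all of `P ∪ Q`. -/
private lemma ml (hdeg : ∀ v, (N : ℝ) - (N : ℝ) / 8 ≤ (G.neighborSet v).ncard) (h8 : 8 ≤ N)
    {j : Fin 3} {P Q : Set (Fin N)} (hPQ : Disjoint P Q)
    (hmono : ∀ p ∈ P, ∀ q ∈ Q, G.Adj p q → c s(p, q) = j)
    (hP : 2 * ((N : ℝ) / 8) - 2 < P.ncard) (hQ : (N : ℝ) / 8 - 1 < Q.ncard) :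
    ∃ K : (colourGraph G c j).ConnectedComponent, P ∪ Q ⊆ K.supp := by
  have hD1 : (1 : ℝ) ≤ (N : ℝ) / 8 := by
    have : (8 : ℝ) ≤ N := by exact_mod_cast h8
    linarith
  have hQne : Q.Nonempty := by
    apply Set.nonempty_of_ncard_ne_zero
    intro h
    rw [h] at hQ
    simp only [Nat.cast_zero] at hQ
    linarith
  obtain ⟨q₀, hq₀⟩ := hQne
  refine ⟨(colourGraph G c j).connectedComponentMk q₀, ?_⟩
  have key : ∀ q ∈ Q, (colourGraph G c j).connectedComponentMk q
      = (colourGraph G c j).connectedComponentMk q₀ := by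
    intro q hq
    have hsub : P \ (G.neighborSet q₀ ∩ G.neighborSet q)
        ⊆ (P \ G.neighborSet q₀) ∪ (P \ G.neighborSet q) := by
      rw [Set.diff_inter]
    have hc1 : ((P \ G.neighborSet q₀).ncard : ℝ) ≤ (N : ℝ) / 8 - 1 :=
      nonnbr hdeg q₀ P (fun h => Set.disjoint_left.mp hPQ h hq₀)
    have hc2 : ((P \ G.neighborSet q).ncard : ℝ) ≤ (N : ℝ) / 8 - 1 :=
      nonnbr hdeg q P (fun h => Set.disjoint_left.mp hPQ h hq)
    have hun : ((P \ G.neighborSet q₀) ∪ (P \ G.neighborSet q)).ncard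
        ≤ (P \ G.neighborSet q₀).ncard + (P \ G.neighborSet q).ncard :=
      Set.ncard_union_le _ _
    have hsu : (P \ (G.neighborSet q₀ ∩ G.neighborSet q)).ncard
        ≤ ((P \ G.neighborSet q₀) ∪ (P \ G.neighborSet q)).ncard :=
      Set.ncard_le_ncard hsub (Set.toFinite _)
    have hpart : (P ∩ (G.neighborSet q₀ ∩ G.neighborSet q)).ncard
        + (P \ (G.neighborSet q₀ ∩ G.neighborSet q)).ncard = P.ncard :=
      Set.ncard_inter_add_ncard_diff_eq_ncard P _ (Set.toFinite _)
    have hne : (P ∩ (G.neighborSet q₀ ∩ G.neighborSet q)).Nonempty := by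
      apply Set.nonempty_of_ncard_ne_zero
      intro h
      rw [h, zero_add] at hpart
      have e1 : ((P \ (G.neighborSet q₀ ∩ G.neighborSet q)).ncard : ℝ) = (P.ncard : ℝ) := by
        exact_mod_cast hpart
      have e2 : ((P \ (G.neighborSet q₀ ∩ G.neighborSet q)).ncard : ℝ)
          ≤ ((P \ G.neighborSet q₀).ncard : ℝ) + ((P \ G.neighborSet q).ncard : ℝ) := by
        exact_mod_cast le_trans hsu hun
      linarith
    obtain ⟨y, hyP, hy0, hyq⟩ := hne
    have e0 : G.Adj q₀ y := hy0
    have eq' : G.Adj q y := hyq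
    have c0 : c s(y, q₀) = j := hmono y hyP q₀ hq₀ e0.symm
    have cq : c s(y, q) = j := hmono y hyP q hq eq'.symm
    have m0 : (colourGraph G c j).connectedComponentMk y
        = (colourGraph G c j).connectedComponentMk q₀ := cg_mk_eq e0.symm c0
    have mq : (colourGraph G c j).connectedComponentMk y
        = (colourGraph G c j).connectedComponentMk q := cg_mk_eq eq'.symm cq
    rw [← mq, m0]
  intro x hx
  rw [SimpleGraph.ConnectedComponent.mem_supp_iff]
  rcases hx with hxP | hxQ
  · have hne : (Q ∩ G.neighborSet x).Nonempty := by
      apply Set.nonempty_of_ncard_ne_zero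
      intro h
      have hpart : (Q ∩ G.neighborSet x).ncard + (Q \ G.neighborSet x).ncard = Q.ncard :=
        Set.ncard_inter_add_ncard_diff_eq_ncard Q _ (Set.toFinite _)
      rw [h, zero_add] at hpart
      have hc1 : ((Q \ G.neighborSet x).ncard : ℝ) ≤ (N : ℝ) / 8 - 1 :=
        nonnbr hdeg x Q (fun hh => Set.disjoint_left.mp hPQ hxP hh)
      have e1 : ((Q \ G.neighborSet x).ncard : ℝ) = (Q.ncard : ℝ) := by exact_mod_cast hpart
      linarith
    obtain ⟨w, hwQ, hwx⟩ := hne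
    have hadj : G.Adj x w := hwx
    have cxw : c s(x, w) = j := hmono x hxP w hwQ hadj
    have := cg_mk_eq hadj cxw
    rw [this, key w hwQ]
  · exact key x hxQ

end aux2
section core

variable {N : ℕ} {G : SimpleGraph (Fin N)} {c : Sym2 (Fin N) → Fin 3}

private lemma core (h8 : 8 ≤ N)
    (hdeg : ∀ v, (N : ℝ) - (N : ℝ) / 8 ≤ (G.neighborSet v).ncard)
    (i₁ : Fin 3) (A : Set (Fin N))
    (hA : ∀ y ∈ A, ∀ w ∈ (Aᶜ : Set (Fin N)), G.Adj y w → c s(y, w) ≠ i₁)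
    (ha : 7 * (N : ℝ) / 24 + 1 ≤ (A.ncard : ℝ))
    (hb : (N : ℝ) / 4 < ((Aᶜ : Set (Fin N)).ncard : ℝ))
    (hcomps : ∀ j, j ≠ i₁ → ∀ K : (colourGraph G c j).ConnectedComponent,
      (K.supp.ncard : ℝ) < (N : ℝ) / 2) : False := by
  have hD1 : (1 : ℝ) ≤ (N : ℝ) / 8 := by
    have : (8 : ℝ) ≤ N := by exact_mod_cast h8
    linarith
  have hab : (A.ncard : ℝ) + ((Aᶜ : Set (Fin N)).ncard : ℝ) = N := by
    have := Set.ncard_add_ncard_compl A (Set.toFinite _) (Set.toFinite _)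
    have h2 : A.ncard + (Aᶜ : Set (Fin N)).ncard = N := by
      rw [this]; simp [Nat.card_eq_fintype_card]
    exact_mod_cast h2
  -- forced colours across the partition
  have force₁ : ∀ (j k : Fin 3), (∀ l : Fin 3, l = i₁ ∨ l = j ∨ l = k) →
      ∀ (M : (colourGraph G c j).ConnectedComponent),
      ∀ y ∈ A ∩ M.supp, ∀ w ∈ (Aᶜ : Set (Fin N)) \ M.supp, G.Adj y w → c s(y, w) = k := by
    intro j k hcov M y hy w hw hadj
    rcases hcov (c s(y, w)) with h | h | h
    · exact absurd h (hA y hy.1 w hw.1 hadj)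
    · exfalso
      have hm := cg_mk_eq hadj h
      have hyM : (colourGraph G c j).connectedComponentMk y = M :=
        (SimpleGraph.ConnectedComponent.mem_supp_iff _ _).mp hy.2
      exact hw.2 ((SimpleGraph.ConnectedComponent.mem_supp_iff _ _).mpr (hm.symm.trans hyM))
    · exact h
  have force₂ : ∀ (j k : Fin 3), (∀ l : Fin 3, l = i₁ ∨ l = j ∨ l = k) →
      ∀ (M : (colourGraph G c j).ConnectedComponent),
      ∀ y ∈ A \ M.supp, ∀ w ∈ (Aᶜ : Set (Fin N)) ∩ M.supp, G.Adj y w → c s(y, w) = k := by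
    intro j k hcov M y hy w hw hadj
    rcases hcov (c s(y, w)) with h | h | h
    · exact absurd h (hA y hy.1 w hw.1 hadj)
    · exfalso
      have hm := cg_mk_eq hadj h
      have hwM : (colourGraph G c j).connectedComponentMk w = M :=
        (SimpleGraph.ConnectedComponent.mem_supp_iff _ _).mp hw.2
      exact hy.2 ((SimpleGraph.ConnectedComponent.mem_supp_iff _ _).mpr (hm.trans hwM))
    · exact h
  -- cardinality bookkeeping
  have hpart : ∀ S : Set (Fin N),
      ((A ∩ S).ncard : ℝ) + (((Aᶜ : Set (Fin N)) ∩ S).ncard : ℝ) = (S.ncard : ℝ) := by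
    intro S
    have h1 : (A ∩ S) ∪ ((Aᶜ : Set (Fin N)) ∩ S) = S := by
      rw [← Set.union_inter_distrib_right, Set.union_compl_self, Set.univ_inter]
    have h2 : Disjoint (A ∩ S) ((Aᶜ : Set (Fin N)) ∩ S) :=
      disjoint_compl_right.mono Set.inter_subset_left Set.inter_subset_left
    have h3 := Set.ncard_union_eq h2 (Set.toFinite _) (Set.toFinite _)
    rw [h1] at h3
    exact_mod_cast h3.symm
  have hdiffA : ∀ S : Set (Fin N),
      ((A ∩ S).ncard : ℝ) + ((A \ S).ncard : ℝ) = (A.ncard : ℝ) := by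
    intro S
    exact_mod_cast Set.ncard_inter_add_ncard_diff_eq_ncard A S (Set.toFinite _)
  have hdiffB : ∀ S : Set (Fin N),
      (((Aᶜ : Set (Fin N)) ∩ S).ncard : ℝ) + (((Aᶜ : Set (Fin N)) \ S).ncard : ℝ)
        = ((Aᶜ : Set (Fin N)).ncard : ℝ) := by
    intro S
    exact_mod_cast Set.ncard_inter_add_ncard_diff_eq_ncard (Aᶜ : Set (Fin N)) S (Set.toFinite _)
  -- builders for the absorbed components
  have buildW₁ : ∀ (j k : Fin 3), (∀ l : Fin 3, l = i₁ ∨ l = j ∨ l = k) →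
      ∀ (M : (colourGraph G c j).ConnectedComponent),
      ((2 * ((N : ℝ) / 8) - 2 < ((A ∩ M.supp).ncard : ℝ)
          ∧ (N : ℝ) / 8 - 1 < (((Aᶜ : Set (Fin N)) \ M.supp).ncard : ℝ)) ∨
        (2 * ((N : ℝ) / 8) - 2 < (((Aᶜ : Set (Fin N)) \ M.supp).ncard : ℝ)
          ∧ (N : ℝ) / 8 - 1 < ((A ∩ M.supp).ncard : ℝ))) →
      ∃ K : (colourGraph G c k).ConnectedComponent,
        (A ∩ M.supp) ∪ ((Aᶜ : Set (Fin N)) \ M.supp) ⊆ K.supp := by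
    intro j k hcov M hor
    have hd : Disjoint (A ∩ M.supp) ((Aᶜ : Set (Fin N)) \ M.supp) :=
      disjoint_compl_right.mono Set.inter_subset_left Set.diff_subset
    rcases hor with ⟨h1, h2⟩ | ⟨h1, h2⟩
    · exact ml hdeg h8 hd (fun p hp q hq hadj => force₁ j k hcov M p hp q hq hadj) h1 h2
    · obtain ⟨K, hK⟩ := ml hdeg h8 hd.symm
        (fun p hp q hq hadj => by
          rw [Sym2.eq_swap]; exact force₁ j k hcov M q hq p hp hadj.symm) h1 h2
      exact ⟨K, by rw [Set.union_comm]; exact hK⟩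
  have buildW₂ : ∀ (j k : Fin 3), (∀ l : Fin 3, l = i₁ ∨ l = j ∨ l = k) →
      ∀ (M : (colourGraph G c j).ConnectedComponent),
      ((2 * ((N : ℝ) / 8) - 2 < (((Aᶜ : Set (Fin N)) ∩ M.supp).ncard : ℝ)
          ∧ (N : ℝ) / 8 - 1 < ((A \ M.supp).ncard : ℝ)) ∨
        (2 * ((N : ℝ) / 8) - 2 < ((A \ M.supp).ncard : ℝ)
          ∧ (N : ℝ) / 8 - 1 < (((Aᶜ : Set (Fin N)) ∩ M.supp).ncard : ℝ))) →
      ∃ K : (colourGraph G c k).ConnectedComponent,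
        ((Aᶜ : Set (Fin N)) ∩ M.supp) ∪ (A \ M.supp) ⊆ K.supp := by
    intro j k hcov M hor
    have hd : Disjoint ((Aᶜ : Set (Fin N)) ∩ M.supp) (A \ M.supp) :=
      disjoint_compl_left.mono Set.inter_subset_left Set.diff_subset
    rcases hor with ⟨h1, h2⟩ | ⟨h1, h2⟩
    · exact ml hdeg h8 hd
        (fun p hp q hq hadj => by
          rw [Sym2.eq_swap]; exact force₂ j k hcov M q hq p hp hadj.symm) h1 h2
    · obtain ⟨K, hK⟩ := ml hdeg h8 hd.symm
        (fun p hp q hq hadj => force₂ j k hcov M p hp q hq hadj) h1 h2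
      exact ⟨K, by rw [Set.union_comm]; exact hK⟩
  -- size of a component containing a disjoint union
  have hsupp_ge : ∀ (j : Fin 3) (K : (colourGraph G c j).ConnectedComponent)
      (X Y : Set (Fin N)), Disjoint X Y → X ∪ Y ⊆ K.supp →
      (X.ncard : ℝ) + (Y.ncard : ℝ) ≤ (K.supp.ncard : ℝ) := by
    intro j K X Y hd hsub
    have h1 : (X ∪ Y).ncard = X.ncard + Y.ncard :=
      Set.ncard_union_eq hd (Set.toFinite _) (Set.toFinite _)
    have h2 : (X ∪ Y).ncard ≤ K.supp.ncard := Set.ncard_le_ncard hsub (Set.toFinite _)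
    have h2' : ((X ∪ Y).ncard : ℝ) ≤ (K.supp.ncard : ℝ) := by exact_mod_cast h2
    rw [h1] at h2'
    exact_mod_cast h2'
  -- THIN: no component of a colour ≠ i₁ has ≥ N/8 vertices on both sides
  have thin : ∀ (j k : Fin 3), j ≠ i₁ → k ≠ i₁ → (∀ l : Fin 3, l = i₁ ∨ l = j ∨ l = k) →
      ∀ M : (colourGraph G c j).ConnectedComponent,
      ¬((N : ℝ) / 8 ≤ ((A ∩ M.supp).ncard : ℝ)
        ∧ (N : ℝ) / 8 ≤ (((Aᶜ : Set (Fin N)) ∩ M.supp).ncard : ℝ)) := by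
    rintro j k hj hk hcov M ⟨hxa, hxb⟩
    have e1 := hdiffA M.supp
    have e2 := hdiffB M.supp
    have e3 : ((A ∩ M.supp).ncard : ℝ) + (((Aᶜ : Set (Fin N)) ∩ M.supp).ncard : ℝ)
        < (N : ℝ) / 2 := by
      have h1 := hcomps j hj M
      have h2 := hpart M.supp
      linarith
    have hdW₁ : Disjoint (A ∩ M.supp) ((Aᶜ : Set (Fin N)) \ M.supp) :=
      disjoint_compl_right.mono Set.inter_subset_left Set.diff_subset
    have hdW₂ : Disjoint ((Aᶜ : Set (Fin N)) ∩ M.supp) (A \ M.supp) :=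
      disjoint_compl_left.mono Set.inter_subset_left Set.diff_subset
    by_cases hV₂ : (2 * ((N : ℝ) / 8) - 2 < (((Aᶜ : Set (Fin N)) ∩ M.supp).ncard : ℝ)
          ∧ (N : ℝ) / 8 - 1 < ((A \ M.supp).ncard : ℝ)) ∨
        (2 * ((N : ℝ) / 8) - 2 < ((A \ M.supp).ncard : ℝ)
          ∧ (N : ℝ) / 8 - 1 < (((Aᶜ : Set (Fin N)) ∩ M.supp).ncard : ℝ))
    · obtain ⟨W₂, hW₂⟩ := buildW₂ j k hcov M hV₂
      have s₂ : (((Aᶜ : Set (Fin N)) ∩ M.supp).ncard : ℝ) + ((A \ M.supp).ncard : ℝ)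
          ≤ (W₂.supp.ncard : ℝ) := hsupp_ge k W₂ _ _ hdW₂ hW₂
      have c₂ := hcomps k hk W₂
      by_cases hV₁ : (2 * ((N : ℝ) / 8) - 2 < ((A ∩ M.supp).ncard : ℝ)
            ∧ (N : ℝ) / 8 - 1 < (((Aᶜ : Set (Fin N)) \ M.supp).ncard : ℝ)) ∨
          (2 * ((N : ℝ) / 8) - 2 < (((Aᶜ : Set (Fin N)) \ M.supp).ncard : ℝ)
            ∧ (N : ℝ) / 8 - 1 < ((A ∩ M.supp).ncard : ℝ))
      · obtain ⟨W₁, hW₁⟩ := buildW₁ j k hcov M hV₁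
        have s₁ : ((A ∩ M.supp).ncard : ℝ) + (((Aᶜ : Set (Fin N)) \ M.supp).ncard : ℝ)
            ≤ (W₁.supp.ncard : ℝ) := hsupp_ge k W₁ _ _ hdW₁ hW₁
        have c₁ := hcomps k hk W₁
        linarith
      · -- ¬V₁ : extract the two inequalities
        have hn2 : (((Aᶜ : Set (Fin N)) \ M.supp).ncard : ℝ) ≤ 2 * ((N : ℝ) / 8) - 2 := by
          by_contra hcon
          push_neg at hcon
          exact hV₁ (Or.inr ⟨hcon, by linarith⟩)
        have hn1 : ((A ∩ M.supp).ncard : ℝ) ≤ 2 * ((N : ℝ) / 8) - 2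
            ∨ (((Aᶜ : Set (Fin N)) \ M.supp).ncard : ℝ) ≤ (N : ℝ) / 8 - 1 := by
          by_contra hcon
          push_neg at hcon
          exact hV₁ (Or.inl ⟨hcon.1, hcon.2⟩)
        rcases hn1 with h | h
        · linarith
        · linarith
    · -- ¬V₂ : mirror
      have hn2' : ((A \ M.supp).ncard : ℝ) ≤ 2 * ((N : ℝ) / 8) - 2 := by
        by_contra hcon
        push_neg at hcon
        exact hV₂ (Or.inr ⟨hcon, by linarith⟩)
      have hn1' : (((Aᶜ : Set (Fin N)) ∩ M.supp).ncard : ℝ) ≤ 2 * ((N : ℝ) / 8) - 2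
          ∨ ((A \ M.supp).ncard : ℝ) ≤ (N : ℝ) / 8 - 1 := by
        by_contra hcon
        push_neg at hcon
        exact hV₂ (Or.inl ⟨hcon.1, hcon.2⟩)
      rcases hn1' with h | h
      · -- xb ≤ 2D−2 and ta ≤ 2D−2, so xa ≥ a−2D+2 and tb ≥ b−2D+2
        by_cases hV₁ : (2 * ((N : ℝ) / 8) - 2 < ((A ∩ M.supp).ncard : ℝ)
              ∧ (N : ℝ) / 8 - 1 < (((Aᶜ : Set (Fin N)) \ M.supp).ncard : ℝ)) ∨
            (2 * ((N : ℝ) / 8) - 2 < (((Aᶜ : Set (Fin N)) \ M.supp).ncard : ℝ)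
              ∧ (N : ℝ) / 8 - 1 < ((A ∩ M.supp).ncard : ℝ))
        · obtain ⟨W₁, hW₁⟩ := buildW₁ j k hcov M hV₁
          have s₁ : ((A ∩ M.supp).ncard : ℝ) + (((Aᶜ : Set (Fin N)) \ M.supp).ncard : ℝ)
              ≤ (W₁.supp.ncard : ℝ) := hsupp_ge k W₁ _ _ hdW₁ hW₁
          have c₁ := hcomps k hk W₁
          linarith
        · have hn2 : (((Aᶜ : Set (Fin N)) \ M.supp).ncard : ℝ) ≤ 2 * ((N : ℝ) / 8) - 2 := by
            by_contra hcon
            push_neg at hcon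
            exact hV₁ (Or.inr ⟨hcon, by linarith⟩)
          have hn1 : ((A ∩ M.supp).ncard : ℝ) ≤ 2 * ((N : ℝ) / 8) - 2
              ∨ (((Aᶜ : Set (Fin N)) \ M.supp).ncard : ℝ) ≤ (N : ℝ) / 8 - 1 := by
            by_contra hcon
            push_neg at hcon
            exact hV₁ (Or.inl ⟨hcon.1, hcon.2⟩)
          rcases hn1 with h' | h'
          · -- xa ≤ 2D−2 but xa ≥ a − 2D + 2 and a = N − b ≥ N − (xb + tb) large
            linarith
          · -- tb ≤ D−1 so b = xb + tb ≤ 3D−3, then xa ≥ a−2D+2 ≥ 3D+5 and xa + xb ≥ 4D+5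
            linarith
      · -- ta ≤ D−1 : xa ≥ a−D+1, tb > 3D+1, establish V₁ (second disjunct)
        have hta : ((A \ M.supp).ncard : ℝ) ≤ (N : ℝ) / 8 - 1 := h
        have htb : 2 * ((N : ℝ) / 8) - 2 < (((Aᶜ : Set (Fin N)) \ M.supp).ncard : ℝ) := by
          linarith
        obtain ⟨W₁, hW₁⟩ := buildW₁ j k hcov M (Or.inr ⟨htb, by linarith⟩)
        have s₁ : ((A ∩ M.supp).ncard : ℝ) + (((Aᶜ : Set (Fin N)) \ M.supp).ncard : ℝ)
            ≤ (W₁.supp.ncard : ℝ) := hsupp_ge k W₁ _ _ hdW₁ hW₁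
        have c₁ := hcomps k hk W₁
        linarith
  -- corollary: A-part of any component is < N/8 or ≤ 2N/8 − 2
  have LA : ∀ (j k : Fin 3), j ≠ i₁ → k ≠ i₁ → (∀ l : Fin 3, l = i₁ ∨ l = j ∨ l = k) →
      ∀ M : (colourGraph G c j).ConnectedComponent,
      ((A ∩ M.supp).ncard : ℝ) < (N : ℝ) / 8
        ∨ ((A ∩ M.supp).ncard : ℝ) ≤ 2 * ((N : ℝ) / 8) - 2 := by
    intro j k hj hk hcov M
    by_contra hcon
    push_neg at hcon
    obtain ⟨h1, h2⟩ := hcon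
    have hxb : (((Aᶜ : Set (Fin N)) ∩ M.supp).ncard : ℝ) < (N : ℝ) / 8 := by
      by_contra hxb
      push_neg at hxb
      exact thin j k hj hk hcov M ⟨h1, hxb⟩
    have e2 := hdiffB M.supp
    obtain ⟨W, hW⟩ := buildW₁ j k hcov M (Or.inl ⟨h2, by linarith⟩)
    have hcov' : ∀ l : Fin 3, l = i₁ ∨ l = k ∨ l = j := by
      intro l
      rcases hcov l with h | h | h
      · exact Or.inl h
      · exact Or.inr (Or.inr h)
      · exact Or.inr (Or.inl h)
    apply thin k j hk hj hcov' W
    constructor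
    · have hsub : A ∩ M.supp ⊆ A ∩ W.supp := fun x hx => ⟨hx.1, hW (Or.inl hx)⟩
      have hle : (A ∩ M.supp).ncard ≤ (A ∩ W.supp).ncard :=
        Set.ncard_le_ncard hsub (Set.toFinite _)
      have hle' : ((A ∩ M.supp).ncard : ℝ) ≤ ((A ∩ W.supp).ncard : ℝ) := by exact_mod_cast hle
      linarith
    · have hsub : (Aᶜ : Set (Fin N)) \ M.supp ⊆ (Aᶜ : Set (Fin N)) ∩ W.supp :=
        fun x hx => ⟨hx.1, hW (Or.inr hx)⟩
      have hle : ((Aᶜ : Set (Fin N)) \ M.supp).ncard ≤ ((Aᶜ : Set (Fin N)) ∩ W.supp).ncard :=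
        Set.ncard_le_ncard hsub (Set.toFinite _)
      have hle' : (((Aᶜ : Set (Fin N)) \ M.supp).ncard : ℝ)
          ≤ (((Aᶜ : Set (Fin N)) ∩ W.supp).ncard : ℝ) := by exact_mod_cast hle
      linarith
  -- corollary: B-part of any component is < N/8 or ≤ 2N/8 − 2
  have LB : ∀ (j k : Fin 3), j ≠ i₁ → k ≠ i₁ → (∀ l : Fin 3, l = i₁ ∨ l = j ∨ l = k) →
      ∀ M : (colourGraph G c j).ConnectedComponent,
      (((Aᶜ : Set (Fin N)) ∩ M.supp).ncard : ℝ) < (N : ℝ) / 8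
        ∨ (((Aᶜ : Set (Fin N)) ∩ M.supp).ncard : ℝ) ≤ 2 * ((N : ℝ) / 8) - 2 := by
    intro j k hj hk hcov M
    by_contra hcon
    push_neg at hcon
    obtain ⟨h1, h2⟩ := hcon
    have hxa : ((A ∩ M.supp).ncard : ℝ) < (N : ℝ) / 8 := by
      by_contra hxa
      push_neg at hxa
      exact thin j k hj hk hcov M ⟨hxa, h1⟩
    have e1 := hdiffA M.supp
    obtain ⟨W, hW⟩ := buildW₂ j k hcov M (Or.inl ⟨h2, by linarith⟩)
    have hcov' : ∀ l : Fin 3, l = i₁ ∨ l = k ∨ l = j := by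
      intro l
      rcases hcov l with h | h | h
      · exact Or.inl h
      · exact Or.inr (Or.inr h)
      · exact Or.inr (Or.inl h)
    apply thin k j hk hj hcov' W
    constructor
    · have hsub : A \ M.supp ⊆ A ∩ W.supp := fun x hx => ⟨hx.1, hW (Or.inr hx)⟩
      have hle : (A \ M.supp).ncard ≤ (A ∩ W.supp).ncard :=
        Set.ncard_le_ncard hsub (Set.toFinite _)
      have hle' : ((A \ M.supp).ncard : ℝ) ≤ ((A ∩ W.supp).ncard : ℝ) := by exact_mod_cast hle
      linarith
    · have hsub : (Aᶜ : Set (Fin N)) ∩ M.supp ⊆ (Aᶜ : Set (Fin N)) ∩ W.supp :=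
        fun x hx => ⟨hx.1, hW (Or.inl hx)⟩
      have hle : ((Aᶜ : Set (Fin N)) ∩ M.supp).ncard ≤ ((Aᶜ : Set (Fin N)) ∩ W.supp).ncard :=
        Set.ncard_le_ncard hsub (Set.toFinite _)
      have hle' : (((Aᶜ : Set (Fin N)) ∩ M.supp).ncard : ℝ)
          ≤ (((Aᶜ : Set (Fin N)) ∩ W.supp).ncard : ℝ) := by exact_mod_cast hle
      linarith
  -- if B is large then A-parts are < N/8
  have L7 : (3 * ((N : ℝ) / 8) - 2 < ((Aᶜ : Set (Fin N)).ncard : ℝ)) →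
      ∀ (j k : Fin 3), j ≠ i₁ → k ≠ i₁ → (∀ l : Fin 3, l = i₁ ∨ l = j ∨ l = k) →
      ∀ M : (colourGraph G c j).ConnectedComponent,
      ((A ∩ M.supp).ncard : ℝ) < (N : ℝ) / 8 := by
    intro hbig j k hj hk hcov M
    by_contra hcon
    push_neg at hcon
    have hxb : (((Aᶜ : Set (Fin N)) ∩ M.supp).ncard : ℝ) < (N : ℝ) / 8 := by
      by_contra hxb
      push_neg at hxb
      exact thin j k hj hk hcov M ⟨hcon, hxb⟩
    have e2 := hdiffB M.supp
    obtain ⟨W, hW⟩ := buildW₁ j k hcov M (Or.inr ⟨by linarith, by linarith⟩)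
    have hcov' : ∀ l : Fin 3, l = i₁ ∨ l = k ∨ l = j := by
      intro l
      rcases hcov l with h | h | h
      · exact Or.inl h
      · exact Or.inr (Or.inr h)
      · exact Or.inr (Or.inl h)
    apply thin k j hk hj hcov' W
    constructor
    · have hsub : A ∩ M.supp ⊆ A ∩ W.supp := fun x hx => ⟨hx.1, hW (Or.inl hx)⟩
      have hle : (A ∩ M.supp).ncard ≤ (A ∩ W.supp).ncard :=
        Set.ncard_le_ncard hsub (Set.toFinite _)
      have hle' : ((A ∩ M.supp).ncard : ℝ) ≤ ((A ∩ W.supp).ncard : ℝ) := by exact_mod_cast hle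
      linarith
    · have hsub : (Aᶜ : Set (Fin N)) \ M.supp ⊆ (Aᶜ : Set (Fin N)) ∩ W.supp :=
        fun x hx => ⟨hx.1, hW (Or.inr hx)⟩
      have hle : ((Aᶜ : Set (Fin N)) \ M.supp).ncard ≤ ((Aᶜ : Set (Fin N)) ∩ W.supp).ncard :=
        Set.ncard_le_ncard hsub (Set.toFinite _)
      have hle' : (((Aᶜ : Set (Fin N)) \ M.supp).ncard : ℝ)
          ≤ (((Aᶜ : Set (Fin N)) ∩ W.supp).ncard : ℝ) := by exact_mod_cast hle
      linarith
  -- pivot inequalities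
  have pivotB : ∀ (j₂ j₃ : Fin 3), (∀ l : Fin 3, l = i₁ ∨ l = j₂ ∨ l = j₃) →
      ∀ w ∈ (Aᶜ : Set (Fin N)),
      (A.ncard : ℝ) - ((N : ℝ) / 8 - 1)
        ≤ ((A ∩ ((colourGraph G c j₂).connectedComponentMk w).supp).ncard : ℝ)
          + ((A ∩ ((colourGraph G c j₃).connectedComponentMk w).supp).ncard : ℝ) := by
    intro j₂ j₃ hcov w hw
    have hsub : A ∩ G.neighborSet w ⊆
        (A ∩ ((colourGraph G c j₂).connectedComponentMk w).supp)
          ∪ (A ∩ ((colourGraph G c j₃).connectedComponentMk w).supp) := by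
      rintro y ⟨hyA, hyN⟩
      have hadj : G.Adj w y := hyN
      rcases hcov (c s(y, w)) with h | h | h
      · exact absurd h (hA y hyA w hw hadj.symm)
      · exact Or.inl ⟨hyA, (SimpleGraph.ConnectedComponent.mem_supp_iff _ _).mpr
          (cg_mk_eq hadj.symm h)⟩
      · exact Or.inr ⟨hyA, (SimpleGraph.ConnectedComponent.mem_supp_iff _ _).mpr
          (cg_mk_eq hadj.symm h)⟩
    have h1 := inter_nbr hdeg w A (fun h => hw h)
    have h2 : (A ∩ G.neighborSet w).ncard ≤
        ((A ∩ ((colourGraph G c j₂).connectedComponentMk w).supp)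
          ∪ (A ∩ ((colourGraph G c j₃).connectedComponentMk w).supp)).ncard :=
      Set.ncard_le_ncard hsub (Set.toFinite _)
    have h3 := Set.ncard_union_le (A ∩ ((colourGraph G c j₂).connectedComponentMk w).supp)
      (A ∩ ((colourGraph G c j₃).connectedComponentMk w).supp)
    have h4 : ((A ∩ G.neighborSet w).ncard : ℝ)
        ≤ ((A ∩ ((colourGraph G c j₂).connectedComponentMk w).supp).ncard : ℝ)
          + ((A ∩ ((colourGraph G c j₃).connectedComponentMk w).supp).ncard : ℝ) := by
      exact_mod_cast le_trans h2 h3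
    linarith
  have pivotA : ∀ (j₂ j₃ : Fin 3), (∀ l : Fin 3, l = i₁ ∨ l = j₂ ∨ l = j₃) →
      ∀ y ∈ A,
      ((Aᶜ : Set (Fin N)).ncard : ℝ) - ((N : ℝ) / 8 - 1)
        ≤ (((Aᶜ : Set (Fin N)) ∩ ((colourGraph G c j₂).connectedComponentMk y).supp).ncard : ℝ)
          + (((Aᶜ : Set (Fin N)) ∩ ((colourGraph G c j₃).connectedComponentMk y).supp).ncard : ℝ) := by
    intro j₂ j₃ hcov y hy
    have hsub : (Aᶜ : Set (Fin N)) ∩ G.neighborSet y ⊆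
        ((Aᶜ : Set (Fin N)) ∩ ((colourGraph G c j₂).connectedComponentMk y).supp)
          ∪ ((Aᶜ : Set (Fin N)) ∩ ((colourGraph G c j₃).connectedComponentMk y).supp) := by
      rintro w ⟨hwB, hwN⟩
      have hadj : G.Adj y w := hwN
      rcases hcov (c s(y, w)) with h | h | h
      · exact absurd h (hA y hy w hwB hadj)
      · exact Or.inl ⟨hwB, (SimpleGraph.ConnectedComponent.mem_supp_iff _ _).mpr
          (cg_mk_eq hadj h).symm⟩
      · exact Or.inr ⟨hwB, (SimpleGraph.ConnectedComponent.mem_supp_iff _ _).mpr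
          (cg_mk_eq hadj h).symm⟩
    have h1 := inter_nbr hdeg y (Aᶜ : Set (Fin N)) (fun h => h hy)
    have h2 : ((Aᶜ : Set (Fin N)) ∩ G.neighborSet y).ncard ≤
        (((Aᶜ : Set (Fin N)) ∩ ((colourGraph G c j₂).connectedComponentMk y).supp)
          ∪ ((Aᶜ : Set (Fin N)) ∩ ((colourGraph G c j₃).connectedComponentMk y).supp)).ncard :=
      Set.ncard_le_ncard hsub (Set.toFinite _)
    have h3 := Set.ncard_union_le
      ((Aᶜ : Set (Fin N)) ∩ ((colourGraph G c j₂).connectedComponentMk y).supp)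
      ((Aᶜ : Set (Fin N)) ∩ ((colourGraph G c j₃).connectedComponentMk y).supp)
    have h4 : (((Aᶜ : Set (Fin N)) ∩ G.neighborSet y).ncard : ℝ)
        ≤ (((Aᶜ : Set (Fin N)) ∩ ((colourGraph G c j₂).connectedComponentMk y).supp).ncard : ℝ)
          + (((Aᶜ : Set (Fin N)) ∩ ((colourGraph G c j₃).connectedComponentMk y).supp).ncard : ℝ) := by
      exact_mod_cast le_trans h2 h3
    linarith
  -- final case analysis
  obtain ⟨j₂, j₃, h2i, h3i, h23, hcov⟩ := fin3_exists i₁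
  have hcov' : ∀ l : Fin 3, l = i₁ ∨ l = j₃ ∨ l = j₂ := by
    intro l
    rcases hcov l with h | h | h
    · exact Or.inl h
    · exact Or.inr (Or.inr h)
    · exact Or.inr (Or.inl h)
  have hBne : (Aᶜ : Set (Fin N)).Nonempty := by
    apply Set.nonempty_of_ncard_ne_zero
    intro h
    rw [h] at hb
    simp only [Nat.cast_zero] at hb
    linarith
  have hAne : A.Nonempty := by
    apply Set.nonempty_of_ncard_ne_zero
    intro h
    rw [h] at ha
    simp only [Nat.cast_zero] at ha
    linarith
  rcases le_or_gt (((Aᶜ : Set (Fin N)).ncard : ℝ)) (3 * ((N : ℝ) / 8) - 2) with hcase | hcase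
  · -- b small, A huge: A-parts < 2N/8, pivot in B
    obtain ⟨w₀, hw₀⟩ := hBne
    have p := pivotB j₂ j₃ hcov w₀ hw₀
    have b₂ := LA j₂ j₃ h2i h3i hcov ((colourGraph G c j₂).connectedComponentMk w₀)
    have b₃ := LA j₃ j₂ h3i h2i hcov' ((colourGraph G c j₃).connectedComponentMk w₀)
    rcases b₂ with h | h <;> rcases b₃ with h' | h' <;> linarith
  · rcases lt_or_ge ((A.ncard : ℝ)) (3 * ((N : ℝ) / 8) - 1) with hcase2 | hcase2
    · -- a small, B huge: B-parts < 2N/8, pivot in A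
      obtain ⟨y₀, hy₀⟩ := hAne
      have p := pivotA j₂ j₃ hcov y₀ hy₀
      have b₂ := LB j₂ j₃ h2i h3i hcov ((colourGraph G c j₂).connectedComponentMk y₀)
      have b₃ := LB j₃ j₂ h3i h2i hcov' ((colourGraph G c j₃).connectedComponentMk y₀)
      rcases b₂ with h | h <;> rcases b₃ with h' | h' <;> linarith
    · -- balanced: all A-parts < N/8, pivot in B
      obtain ⟨w₀, hw₀⟩ := hBne
      have p := pivotB j₂ j₃ hcov w₀ hw₀
      have b₂ := L7 hcase j₂ j₃ h2i h3i hcov ((colourGraph G c j₂).connectedComponentMk w₀)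
      have b₃ := L7 hcase j₃ j₂ h3i h2i hcov' ((colourGraph G c j₃).connectedComponentMk w₀)
      linarith

end core
/-- Let G be a graph on N vertices with minimum degree at least N − N/8, 3-edge-coloured.
If the largest monochromatic component K₁ of G has fewer than 3N/4 vertices, then there
exists a monochromatic component of a different colour with at least N/2 vertices. -/
theorem stmt14 (N : ℕ) (G : SimpleGraph (Fin N))
    (hdeg : ∀ v, (N : ℝ) - (N : ℝ) / 8 ≤ (G.neighborSet v).ncard)
    (c : Sym2 (Fin N) → Fin 3)
    (i₁ : Fin 3) (K₁ : (colourGraph G c i₁).ConnectedComponent)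
    (hmax : ∀ (j : Fin 3) (K : (colourGraph G c j).ConnectedComponent),
      K.supp.ncard ≤ K₁.supp.ncard)
    (hsmall : (K₁.supp.ncard : ℝ) < 3 * (N : ℝ) / 4) :
    ∃ (j : Fin 3) (K : (colourGraph G c j).ConnectedComponent),
      j ≠ i₁ ∧ (N : ℝ) / 2 ≤ K.supp.ncard := by
  by_contra hcon
  push_neg at hcon
  obtain ⟨v₀, hv₀⟩ := K₁.exists_rep
  -- N ≥ 8
  have h8 : 8 ≤ N := by
    by_contra hlt
    push_neg at hlt
    have h1 := hdeg v₀
    have hsub : G.neighborSet v₀ ⊆ {v₀}ᶜ := by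
      intro x hx
      simp only [Set.mem_compl_iff, Set.mem_singleton_iff]
      rintro rfl
      exact G.irrefl hx
    have h2 : (G.neighborSet v₀).ncard ≤ ({v₀}ᶜ : Set (Fin N)).ncard :=
      Set.ncard_le_ncard hsub (Set.toFinite _)
    have h3 : ({v₀} : Set (Fin N)).ncard + ({v₀}ᶜ : Set (Fin N)).ncard = N := by
      rw [Set.ncard_add_ncard_compl]
      simp [Nat.card_eq_fintype_card]
    have h4 : ({v₀} : Set (Fin N)).ncard = 1 := Set.ncard_singleton v₀
    have h2' : ((G.neighborSet v₀).ncard : ℝ) ≤ (({v₀}ᶜ : Set (Fin N)).ncard : ℝ) := by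
      exact_mod_cast h2
    have h3' : (({v₀} : Set (Fin N)).ncard : ℝ) + (({v₀}ᶜ : Set (Fin N)).ncard : ℝ) = N := by
      exact_mod_cast h3
    have h4' : (({v₀} : Set (Fin N)).ncard : ℝ) = 1 := by exact_mod_cast h4
    have hlt' : (N : ℝ) < 8 := by exact_mod_cast hlt
    linarith
  -- cross edges avoid colour i₁
  have hA : ∀ y ∈ K₁.supp, ∀ w ∈ (K₁.suppᶜ : Set (Fin N)), G.Adj y w → c s(y, w) ≠ i₁ := by
    intro y hy w hw hadj hc
    have hm := cg_mk_eq hadj hc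
    have hyK : (colourGraph G c i₁).connectedComponentMk y = K₁ :=
      (SimpleGraph.ConnectedComponent.mem_supp_iff _ _).mp hy
    exact hw ((SimpleGraph.ConnectedComponent.mem_supp_iff _ _).mpr (hm.symm.trans hyK))
  -- pigeonhole: K₁ is large
  have ha : 7 * (N : ℝ) / 24 + 1 ≤ (K₁.supp.ncard : ℝ) := by
    classical
    have hcover : G.neighborSet v₀ ⊆
        {u | u ∈ G.neighborSet v₀ ∧ c s(v₀, u) = 0}
          ∪ {u | u ∈ G.neighborSet v₀ ∧ c s(v₀, u) = 1}
          ∪ {u | u ∈ G.neighborSet v₀ ∧ c s(v₀, u) = 2} := by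
      intro u hu
      have h3 : ∀ x : Fin 3, x = 0 ∨ x = 1 ∨ x = 2 := by decide
      rcases h3 (c s(v₀, u)) with h | h | h
      · exact Or.inl (Or.inl ⟨hu, h⟩)
      · exact Or.inl (Or.inr ⟨hu, h⟩)
      · exact Or.inr ⟨hu, h⟩
    have hex : ∃ j : Fin 3, ((N : ℝ) - (N : ℝ) / 8) / 3
        ≤ (({u | u ∈ G.neighborSet v₀ ∧ c s(v₀, u) = j}).ncard : ℝ) := by
      by_contra hcc
      push_neg at hcc
      have h0 := hcc 0
      have h1 := hcc 1
      have h2 := hcc 2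
      have hu1 : (G.neighborSet v₀).ncard ≤
          ({u | u ∈ G.neighborSet v₀ ∧ c s(v₀, u) = 0}
            ∪ {u | u ∈ G.neighborSet v₀ ∧ c s(v₀, u) = 1}
            ∪ {u | u ∈ G.neighborSet v₀ ∧ c s(v₀, u) = 2}).ncard :=
        Set.ncard_le_ncard hcover (Set.toFinite _)
      have hu2 := Set.ncard_union_le
        ({u | u ∈ G.neighborSet v₀ ∧ c s(v₀, u) = 0}
          ∪ {u | u ∈ G.neighborSet v₀ ∧ c s(v₀, u) = 1})
        {u | u ∈ G.neighborSet v₀ ∧ c s(v₀, u) = 2}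
      have hu3 := Set.ncard_union_le
        {u | u ∈ G.neighborSet v₀ ∧ c s(v₀, u) = 0}
        {u | u ∈ G.neighborSet v₀ ∧ c s(v₀, u) = 1}
      have hu4 : ((G.neighborSet v₀).ncard : ℝ) ≤
          (({u | u ∈ G.neighborSet v₀ ∧ c s(v₀, u) = 0}).ncard : ℝ)
            + (({u | u ∈ G.neighborSet v₀ ∧ c s(v₀, u) = 1}).ncard : ℝ)
            + (({u | u ∈ G.neighborSet v₀ ∧ c s(v₀, u) = 2}).ncard : ℝ) := by
        have := le_trans hu1 (le_trans hu2 (by omega :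
          ({u | u ∈ G.neighborSet v₀ ∧ c s(v₀, u) = 0}
            ∪ {u | u ∈ G.neighborSet v₀ ∧ c s(v₀, u) = 1}).ncard
            + ({u | u ∈ G.neighborSet v₀ ∧ c s(v₀, u) = 2}).ncard ≤
          ({u | u ∈ G.neighborSet v₀ ∧ c s(v₀, u) = 0}).ncard
            + ({u | u ∈ G.neighborSet v₀ ∧ c s(v₀, u) = 1}).ncard
            + ({u | u ∈ G.neighborSet v₀ ∧ c s(v₀, u) = 2}).ncard))
        exact_mod_cast this
      have := hdeg v₀
      linarith
    obtain ⟨j, hj⟩ := hex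
    have hsub : insert v₀ {u | u ∈ G.neighborSet v₀ ∧ c s(v₀, u) = j}
        ⊆ ((colourGraph G c j).connectedComponentMk v₀).supp := by
      intro x hx
      rcases hx with rfl | hx
      · exact (SimpleGraph.ConnectedComponent.mem_supp_iff _ _).mpr rfl
      · exact (SimpleGraph.ConnectedComponent.mem_supp_iff _ _).mpr (cg_mk_eq hx.1 hx.2).symm
    have hins : (insert v₀ {u | u ∈ G.neighborSet v₀ ∧ c s(v₀, u) = j}).ncard
        = ({u | u ∈ G.neighborSet v₀ ∧ c s(v₀, u) = j}).ncard + 1 :=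
      Set.ncard_insert_of_notMem (fun h => G.irrefl h.1) (Set.toFinite _)
    have hle : (insert v₀ {u | u ∈ G.neighborSet v₀ ∧ c s(v₀, u) = j}).ncard
        ≤ ((colourGraph G c j).connectedComponentMk v₀).supp.ncard :=
      Set.ncard_le_ncard hsub (Set.toFinite _)
    have hm := hmax j ((colourGraph G c j).connectedComponentMk v₀)
    have hfin : ({u | u ∈ G.neighborSet v₀ ∧ c s(v₀, u) = j}).ncard + 1 ≤ K₁.supp.ncard := by
      omega
    have hfin' : (({u | u ∈ G.neighborSet v₀ ∧ c s(v₀, u) = j}).ncard : ℝ) + 1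
        ≤ (K₁.supp.ncard : ℝ) := by exact_mod_cast hfin
    linarith
  -- complement is large
  have hb : (N : ℝ) / 4 < ((K₁.suppᶜ : Set (Fin N)).ncard : ℝ) := by
    have h1 : K₁.supp.ncard + (K₁.suppᶜ : Set (Fin N)).ncard = N := by
      rw [Set.ncard_add_ncard_compl]
      simp [Nat.card_eq_fintype_card]
    have h1' : (K₁.supp.ncard : ℝ) + ((K₁.suppᶜ : Set (Fin N)).ncard : ℝ) = N := by
      exact_mod_cast h1
    linarith
  exact core h8 hdeg i₁ K₁.supp hA ha hb (fun j hj K => hcon j K hj)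
end

section
/- For all sufficiently large N the following holds. Let Ĥ = Ĥ(m₀; m₁, m₂, 0) be the graph on vertex set W partitioned into disjoint sets Z₀, Z₁, Z₂ of sizes m₀, m₁, m₂, whose edges are all pairs of vertices in two different parts together with all pairs inside Z₀. Let J be a b'-dense subgraph of Ĥ where b' ≤ N/8 − 6√N, and suppose (i) m₀ + m₁ + m₂ ≤ N, (ii) m₀ + m₁/2 + m₂ ≥ 3N/4, (iii) m₂ ≤ N/4, and (iv) m₀ > N/2 − m₂ ≥ N/4. Suppose the edges of J are coloured with two colours and that no monochromatic component of J contains a matching saturating at least N/2 vertices. Then the vertex set W can be covered by two monochromatic components of different colours; furthermore, either Z₀ is entirely contained in one of them, or each of the two components covers all but at most b' vertices of W. -/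
open SimpleGraph

/-- The graph Ĥ(m₀; m₁, m₂, 0) on a vertex set partitioned into parts `Z 0, Z 1, Z 2`:
its edges are all pairs of vertices lying in two different parts together with all pairs
inside `Z 0`. -/
def hatH3 {V : Type*} (Z : Fin 3 → Set V) : SimpleGraph V where
  Adj u v := u ≠ v ∧ ((u ∈ Z 0 ∧ v ∈ Z 0) ∨ ∃ i j : Fin 3, i ≠ j ∧ u ∈ Z i ∧ v ∈ Z j)
  symm := by
    constructor
    rintro u v ⟨hne, h⟩
    refine ⟨hne.symm, ?_⟩
    rcases h with ⟨h1, h2⟩ | ⟨i, j, hij, hi, hj⟩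
    · exact Or.inl ⟨h2, h1⟩
    · exact Or.inr ⟨j, i, hij.symm, hj, hi⟩
  loopless := ⟨fun v h => h.1 rfl⟩

/-- The subgraph of `J` spanned by the edges of colour `i` under the 2-edge-colouring `c`. -/
def colourGraph2 {V : Type*} (J : SimpleGraph V) (c : Sym2 V → Fin 2) (i : Fin 2) :
    SimpleGraph V where
  Adj u v := J.Adj u v ∧ c s(u, v) = i
  symm := ⟨fun u v h => ⟨h.1.symm, by rw [Sym2.eq_swap]; exact h.2⟩⟩
  loopless := ⟨fun v h => J.irrefl h.1⟩

/-- Claim 10 of the paper: with the setup of Lemma 8 (m₃ = 0), if no monochromatic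
component of the 2-coloured J contains a matching saturating at least N/2 vertices, then
the vertex set W can be covered by two monochromatic components of different colours;
moreover either Z₀ is contained in one of them, or each of the two components covers all
but at most b' vertices of W. -/
theorem stmt19 :
    ∃ N₀ : ℕ, ∀ N : ℕ, N₀ ≤ N →
      ∀ (V : Type) [Fintype V], ∀ (Z : Fin 3 → Set V) (m : Fin 3 → ℕ) (b' : ℝ),
        (⋃ i, Z i) = Set.univ →
        (∀ i j : Fin 3, i ≠ j → Disjoint (Z i) (Z j)) →
        (∀ i, (Z i).ncard = m i) →
        b' ≤ (N : ℝ) / 8 - 6 * Real.sqrt N →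
        ∀ J : SimpleGraph V, J ≤ hatH3 Z →
          (∀ v : V, (((hatH3 Z).neighborSet v).ncard : ℝ) < (J.neighborSet v).ncard + b') →
          m 0 + m 1 + m 2 ≤ N →
          3 * (N : ℝ) / 4 ≤ (m 0 : ℝ) + (m 1 : ℝ) / 2 + m 2 →
          (m 2 : ℝ) ≤ (N : ℝ) / 4 →
          ((N : ℝ) / 2 - m 2 < m 0 ∧ (N : ℝ) / 4 ≤ (N : ℝ) / 2 - m 2) →
          ∀ c : Sym2 V → Fin 2,
            (¬ ∃ (i : Fin 2) (M : (colourGraph2 J c i).Subgraph)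
                (K : (colourGraph2 J c i).ConnectedComponent),
                M.IsMatching ∧ M.verts ⊆ K.supp ∧ (N : ℝ) / 2 ≤ M.verts.ncard) →
            ∃ (i j : Fin 2), i ≠ j ∧
              ∃ (K₂ : (colourGraph2 J c i).ConnectedComponent)
                (K₃ : (colourGraph2 J c j).ConnectedComponent),
                K₂.supp ∪ K₃.supp = Set.univ ∧
                ((Z 0 ⊆ K₂.supp ∨ Z 0 ⊆ K₃.supp) ∨
                  (((K₂.suppᶜ).ncard : ℝ) ≤ b' ∧ ((K₃.suppᶜ).ncard : ℝ) ≤ b')) := by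
  refine ⟨1, ?_⟩
  intro N hN V _ Z m b' hcov hdisj hcard hb' J hJH hdens hsum hii hm2 hiv c _hmatch
  obtain ⟨hm0gt, hm2le⟩ := hiv
  have hN1 : (1 : ℝ) ≤ N := by exact_mod_cast hN
  have hsq : (1 : ℝ) ≤ Real.sqrt N := Real.one_le_sqrt.2 hN1
  have hm0 : (N : ℝ) / 4 < (m 0 : ℝ) := lt_of_le_of_lt hm2le hm0gt
  have hm02 : (N : ℝ) / 2 < (m 0 : ℝ) + (m 2 : ℝ) := by linarith
  have hm01 : (N : ℝ) / 2 ≤ (m 0 : ℝ) + (m 1 : ℝ) := by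
    have h1 : (0 : ℝ) ≤ (m 1 : ℝ) := Nat.cast_nonneg _
    linarith
  -- every vertex is in some part
  have hpart : ∀ x : V, ∃ k, x ∈ Z k := by
    intro x
    have hx : x ∈ ⋃ i, Z i := by rw [hcov]; trivial
    simpa using hx
  -- adjacency helpers for hatH3
  have hHp : ∀ {x y : V} {k k' : Fin 3}, x ∈ Z k → y ∈ Z k' → k ≠ k' → x ≠ y →
      (hatH3 Z).Adj x y := fun hx hy hkk hxy => ⟨hxy, Or.inr ⟨_, _, hkk, hx, hy⟩⟩
  have hH0 : ∀ {x y : V}, x ∈ Z 0 → x ≠ y → (hatH3 Z).Adj x y := by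
    intro x y hx hxy
    obtain ⟨k, hk⟩ := hpart y
    by_cases hk0 : k = 0
    · exact ⟨hxy, Or.inl ⟨hx, hk0 ▸ hk⟩⟩
    · exact hHp hx hk (fun h => hk0 h.symm) hxy
  -- deficiency lemma
  have Ldef : ∀ (u : V) (S : Set V), (∀ y ∈ S, (hatH3 Z).Adj u y) → (∀ y ∈ S, ¬ J.Adj u y) →
      (S.ncard : ℝ) < b' := by
    intro u S hH hJ
    have hsub : S ⊆ (hatH3 Z).neighborSet u \ J.neighborSet u := fun y hy => ⟨hH y hy, hJ y hy⟩
    have h1 : S.ncard ≤ ((hatH3 Z).neighborSet u \ J.neighborSet u).ncard :=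
      Set.ncard_le_ncard hsub (Set.toFinite _)
    have hsub2 : J.neighborSet u ⊆ (hatH3 Z).neighborSet u := fun y hy => hJH hy
    have h2 := Set.ncard_diff_add_ncard_of_subset hsub2 (Set.toFinite _)
    have h3 := hdens u
    have h1' : (S.ncard : ℝ) ≤ (((hatH3 Z).neighborSet u \ J.neighborSet u).ncard : ℝ) := by
      exact_mod_cast h1
    have h2' : ((((hatH3 Z).neighborSet u \ J.neighborSet u).ncard : ℝ))
        + ((J.neighborSet u).ncard : ℝ) = (((hatH3 Z).neighborSet u).ncard : ℝ) := by
      exact_mod_cast h2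
    linarith
  obtain ⟨z₀, hz₀⟩ : (Z 0).Nonempty := by
    apply Set.nonempty_of_ncard_ne_zero
    rw [hcard 0]
    intro h
    rw [h] at hm0
    norm_num at hm0
    linarith
  -- cardinality of the whole vertex set
  have huniv : (Set.univ : Set V) = Z 0 ∪ (Z 1 ∪ Z 2) := by
    rw [← hcov]
    ext x
    simp only [Set.mem_iUnion, Set.mem_union]
    constructor
    · rintro ⟨i, hi⟩
      fin_cases i
      · exact Or.inl hi
      · exact Or.inr (Or.inl hi)
      · exact Or.inr (Or.inr hi)
    · rintro (h | h | h)
      exacts [⟨0, h⟩, ⟨1, h⟩, ⟨2, h⟩]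
  have hncardU : ((Set.univ : Set V).ncard : ℝ) = (m 0 : ℝ) + m 1 + m 2 := by
    rw [huniv, Set.ncard_union_eq (by
        refine Set.disjoint_union_right.2 ⟨hdisj 0 1 (by decide), hdisj 0 2 (by decide)⟩)
      (Set.toFinite _) (Set.toFinite _),
      Set.ncard_union_eq (hdisj 1 2 (by decide)) (Set.toFinite _) (Set.toFinite _),
      hcard 0, hcard 1, hcard 2]
    push_cast
    ring
  have hnn : 3 * (N : ℝ) / 4 ≤ ((Set.univ : Set V).ncard : ℝ) := by
    rw [hncardU]
    have h1 : (0 : ℝ) ≤ (m 1 : ℝ) := Nat.cast_nonneg _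
    linarith
  -- colour helpers
  have fin2 : ∀ e : Fin 2, e = 0 ∨ e = 1 := by decide
  have fin2' : ∀ i j e : Fin 2, i ≠ j → e ≠ i → e = j := by decide
  have madj : ∀ (i : Fin 2) {x y : V}, J.Adj x y → c s(x, y) = i →
      (colourGraph2 J c i).connectedComponentMk x = (colourGraph2 J c i).connectedComponentMk y :=
    fun i x y h hc => ConnectedComponent.sound (SimpleGraph.Adj.reachable ⟨h, hc⟩)
  by_cases hsplit : ∃ u ∈ Z 0, ∃ v ∈ Z 0,
      (colourGraph2 J c 0).connectedComponentMk u ≠ (colourGraph2 J c 0).connectedComponentMk v ∧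
      (colourGraph2 J c 1).connectedComponentMk u ≠ (colourGraph2 J c 1).connectedComponentMk v
  · -- CASE 1 : two vertices of Z 0 split in both colours
    obtain ⟨u, hu, v, hv, hruv, hbuv⟩ := hsplit
    -- classification of vertices: adjacency to both u' and v' forces membership in P or Q
    have hC1 : ∀ u' v' : V, u' ∈ Z 0 → v' ∈ Z 0 →
        (colourGraph2 J c 0).connectedComponentMk u' ≠ (colourGraph2 J c 0).connectedComponentMk v' →
        (colourGraph2 J c 1).connectedComponentMk u' ≠ (colourGraph2 J c 1).connectedComponentMk v' →
        ∀ w : V,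
        w ∉ {x : V | (colourGraph2 J c 0).connectedComponentMk x = (colourGraph2 J c 0).connectedComponentMk u' ∧
             (colourGraph2 J c 1).connectedComponentMk x = (colourGraph2 J c 1).connectedComponentMk v'} →
        w ∉ {x : V | (colourGraph2 J c 0).connectedComponentMk x = (colourGraph2 J c 0).connectedComponentMk v' ∧
             (colourGraph2 J c 1).connectedComponentMk x = (colourGraph2 J c 1).connectedComponentMk u'} →
        w ∈ ({u', v'} : Set V) ∪ ((hatH3 Z).neighborSet u' \ J.neighborSet u')
            ∪ ((hatH3 Z).neighborSet v' \ J.neighborSet v') := by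
      intro u' v' hu' hv' hr hb w hwP hwQ
      by_cases hwu : w = u'
      · exact Or.inl (Or.inl (Or.inl hwu))
      by_cases hwv : w = v'
      · exact Or.inl (Or.inl (Or.inr hwv))
      by_cases hau : J.Adj u' w
      · by_cases hav : J.Adj v' w
        · exfalso
          rcases fin2 (c s(u', w)) with he1 | he1 <;> rcases fin2 (c s(v', w)) with he2 | he2
          · exact hr ((madj 0 hau he1).trans (madj 0 hav he2).symm)
          · exact hwP ⟨(madj 0 hau he1).symm, (madj 1 hav he2).symm⟩
          · exact hwQ ⟨(madj 0 hav he2).symm, (madj 1 hau he1).symm⟩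
          · exact hb ((madj 1 hau he1).trans (madj 1 hav he2).symm)
        · exact Or.inr ⟨hH0 hv' (fun h => hwv h.symm), hav⟩
      · exact Or.inl (Or.inr ⟨hH0 hu' (fun h => hwu h.symm), hau⟩)
    -- the main engine for Case 1
    have core : ∀ u' v' z' : V, u' ∈ Z 0 → v' ∈ Z 0 →
        (colourGraph2 J c 0).connectedComponentMk u' ≠ (colourGraph2 J c 0).connectedComponentMk v' →
        (colourGraph2 J c 1).connectedComponentMk u' ≠ (colourGraph2 J c 1).connectedComponentMk v' →
        z' ∈ Z 0 →
        (colourGraph2 J c 0).connectedComponentMk z' = (colourGraph2 J c 0).connectedComponentMk u' →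
        (colourGraph2 J c 1).connectedComponentMk z' = (colourGraph2 J c 1).connectedComponentMk v' →
        ∃ (i j : Fin 2), i ≠ j ∧
          ∃ (K₂ : (colourGraph2 J c i).ConnectedComponent)
            (K₃ : (colourGraph2 J c j).ConnectedComponent),
            K₂.supp ∪ K₃.supp = Set.univ ∧
            ((Z 0 ⊆ K₂.supp ∨ Z 0 ⊆ K₃.supp) ∨
              (((K₂.suppᶜ).ncard : ℝ) ≤ b' ∧ ((K₃.suppᶜ).ncard : ℝ) ≤ b')) := by
      intro u' v' z' hu' hv' hr hb hz' hzP1 hzP2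
      set P : Set V := {x : V |
          (colourGraph2 J c 0).connectedComponentMk x = (colourGraph2 J c 0).connectedComponentMk u' ∧
          (colourGraph2 J c 1).connectedComponentMk x = (colourGraph2 J c 1).connectedComponentMk v'}
        with hPdef
      set Q : Set V := {x : V |
          (colourGraph2 J c 0).connectedComponentMk x = (colourGraph2 J c 0).connectedComponentMk v' ∧
          (colourGraph2 J c 1).connectedComponentMk x = (colourGraph2 J c 1).connectedComponentMk u'}
        with hQdef
      have hu'v' : u' ≠ v' := by
        intro h; exact hr (by rw [h])
      -- |Q| < b' : there are no J-edges from z' (which lies "inside" P) to Q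
      have hQsmall : ((Q.ncard : ℝ)) < b' := by
        apply Ldef z' Q
        · intro y hy
          have hyz : z' ≠ y := by
            intro h
            rw [← h] at hy
            exact hr (hzP1.symm.trans hy.1)
          exact hH0 hz' hyz
        · intro y hy hadj
          rcases fin2 (c s(z', y)) with he | he
          · exact hr ((hzP1.symm.trans (madj 0 hadj he)).trans hy.1)
          · exact hb ((hy.2.symm.trans (madj 1 hadj he).symm).trans hzP2)
      -- counting : P is large
      have hDu : (((hatH3 Z).neighborSet u' \ J.neighborSet u').ncard : ℝ) < b' :=
        Ldef u' _ (fun y hy => hy.1) (fun y hy => hy.2)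
      have hDv : (((hatH3 Z).neighborSet v' \ J.neighborSet v').ncard : ℝ) < b' :=
        Ldef v' _ (fun y hy => hy.1) (fun y hy => hy.2)
      have hPbig : ((Set.univ : Set V).ncard : ℝ) < (P.ncard : ℝ) + 3 * b' + 2 := by
        have hsubU : (Set.univ : Set V) ⊆ P ∪ Q ∪ (({u', v'} : Set V)
            ∪ ((hatH3 Z).neighborSet u' \ J.neighborSet u')
            ∪ ((hatH3 Z).neighborSet v' \ J.neighborSet v')) := by
          intro w _
          by_cases hwP : w ∈ P
          · exact Or.inl (Or.inl hwP)
          by_cases hwQ : w ∈ Q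
          · exact Or.inl (Or.inr hwQ)
          · exact Or.inr (hC1 u' v' hu' hv' hr hb w hwP hwQ)
        have h1 : (Set.univ : Set V).ncard ≤ (P ∪ Q ∪ (({u', v'} : Set V)
            ∪ ((hatH3 Z).neighborSet u' \ J.neighborSet u')
            ∪ ((hatH3 Z).neighborSet v' \ J.neighborSet v'))).ncard :=
          Set.ncard_le_ncard hsubU (Set.toFinite _)
        have h2 := Set.ncard_union_le (P ∪ Q) (({u', v'} : Set V)
            ∪ ((hatH3 Z).neighborSet u' \ J.neighborSet u')
            ∪ ((hatH3 Z).neighborSet v' \ J.neighborSet v'))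
        have h3 := Set.ncard_union_le P Q
        have h4 := Set.ncard_union_le (({u', v'} : Set V)
            ∪ ((hatH3 Z).neighborSet u' \ J.neighborSet u'))
            ((hatH3 Z).neighborSet v' \ J.neighborSet v')
        have h5 := Set.ncard_union_le ({u', v'} : Set V)
            ((hatH3 Z).neighborSet u' \ J.neighborSet u')
        have h6 : ({u', v'} : Set V).ncard = 2 := Set.ncard_pair hu'v'
        have h1' : (((Set.univ : Set V)).ncard : ℝ) ≤ ((P ∪ Q ∪ (({u', v'} : Set V)
            ∪ ((hatH3 Z).neighborSet u' \ J.neighborSet u')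
            ∪ ((hatH3 Z).neighborSet v' \ J.neighborSet v'))).ncard : ℝ) := by exact_mod_cast h1
        have h2' : ((P ∪ Q ∪ (({u', v'} : Set V)
            ∪ ((hatH3 Z).neighborSet u' \ J.neighborSet u')
            ∪ ((hatH3 Z).neighborSet v' \ J.neighborSet v'))).ncard : ℝ)
            ≤ ((P ∪ Q).ncard : ℝ) + ((({u', v'} : Set V)
            ∪ ((hatH3 Z).neighborSet u' \ J.neighborSet u')
            ∪ ((hatH3 Z).neighborSet v' \ J.neighborSet v')).ncard : ℝ) := by exact_mod_cast h2
        have h3' : ((P ∪ Q).ncard : ℝ) ≤ (P.ncard : ℝ) + (Q.ncard : ℝ) := by exact_mod_cast h3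
        have h4' : (((({u', v'} : Set V)
            ∪ ((hatH3 Z).neighborSet u' \ J.neighborSet u')
            ∪ ((hatH3 Z).neighborSet v' \ J.neighborSet v')).ncard) : ℝ)
            ≤ (((({u', v'} : Set V)
            ∪ ((hatH3 Z).neighborSet u' \ J.neighborSet u')).ncard) : ℝ)
            + (((hatH3 Z).neighborSet v' \ J.neighborSet v').ncard : ℝ) := by exact_mod_cast h4
        have h5' : (((({u', v'} : Set V)
            ∪ ((hatH3 Z).neighborSet u' \ J.neighborSet u')).ncard) : ℝ)
            ≤ (({u', v'} : Set V).ncard : ℝ)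
            + (((hatH3 Z).neighborSet u' \ J.neighborSet u').ncard : ℝ) := by exact_mod_cast h5
        have h6' : (({u', v'} : Set V).ncard : ℝ) = 2 := by exact_mod_cast h6
        linarith
      -- the two components cover everything
      have hcover : ∀ w : V,
          (colourGraph2 J c 0).connectedComponentMk w = (colourGraph2 J c 0).connectedComponentMk u' ∨
          (colourGraph2 J c 1).connectedComponentMk w = (colourGraph2 J c 1).connectedComponentMk v' := by
        intro w
        by_contra hw
        push_neg at hw
        obtain ⟨hw0, hw1⟩ := hw
        have hwP : w ∉ P := fun h => hw0 h.1
        have hnoedge : ∀ x ∈ P, ¬ J.Adj w x := by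
          intro x hx hadj
          rcases fin2 (c s(w, x)) with he | he
          · exact hw0 ((madj 0 hadj he).trans hx.1)
          · exact hw1 ((madj 1 hadj he).trans hx.2)
        obtain ⟨k, hk⟩ := hpart w
        have hwne : ∀ x ∈ P, w ≠ x := fun x hx h => hwP (h ▸ hx)
        fin_cases k
        · -- w ∈ Z 0 : impossible since P is big
          have hPb : ((P.ncard : ℝ)) < b' := Ldef w P (fun x hx => hH0 hk (hwne x hx)) hnoedge
          linarith
        · -- w ∈ Z 1
          have hP1 : (((P \ Z 1).ncard : ℝ)) < b' := by
            apply Ldef w (P \ Z 1)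
            · intro x hx
              obtain ⟨k', hk'⟩ := hpart x
              have hk'1 : (1 : Fin 3) ≠ k' := fun h => hx.2 (h ▸ hk')
              exact hHp hk hk' hk'1 (hwne x hx.1)
            · exact fun x hx => hnoedge x hx.1
          have hsplitP : (P.ncard : ℝ) ≤ ((P ∩ Z 1).ncard : ℝ) + ((P \ Z 1).ncard : ℝ) := by
            have h := Set.ncard_union_le (P ∩ Z 1) (P \ Z 1)
            rw [Set.inter_union_diff] at h
            exact_mod_cast h
          have hPZ1 : ((P ∩ Z 1).ncard : ℝ) ≤ (m 1 : ℝ) := by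
            have h : (P ∩ Z 1).ncard ≤ (Z 1).ncard :=
              Set.ncard_le_ncard Set.inter_subset_right (Set.toFinite _)
            rw [hcard 1] at h
            exact_mod_cast h
          linarith
        · -- w ∈ Z 2
          have hP2 : (((P \ Z 2).ncard : ℝ)) < b' := by
            apply Ldef w (P \ Z 2)
            · intro x hx
              obtain ⟨k', hk'⟩ := hpart x
              have hk'2 : (2 : Fin 3) ≠ k' := fun h => hx.2 (h ▸ hk')
              exact hHp hk hk' hk'2 (hwne x hx.1)
            · exact fun x hx => hnoedge x hx.1
          have hsplitP : (P.ncard : ℝ) ≤ ((P ∩ Z 2).ncard : ℝ) + ((P \ Z 2).ncard : ℝ) := by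
            have h := Set.ncard_union_le (P ∩ Z 2) (P \ Z 2)
            rw [Set.inter_union_diff] at h
            exact_mod_cast h
          have hPZ2 : ((P ∩ Z 2).ncard : ℝ) ≤ (m 2 : ℝ) := by
            have h : (P ∩ Z 2).ncard ≤ (Z 2).ncard :=
              Set.ncard_le_ncard Set.inter_subset_right (Set.toFinite _)
            rw [hcard 2] at h
            exact_mod_cast h
          linarith
      -- complements are small
      have hD2 : ((((colourGraph2 J c 0).connectedComponentMk u').suppᶜ.ncard : ℝ)) < b' := by
        apply Ldef u'
        · intro y hy
          simp only [Set.mem_compl_iff, ConnectedComponent.mem_supp_iff] at hy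
          have : u' ≠ y := by
            intro h
            exact hy (by rw [← h])
          exact hH0 hu' this
        · intro y hy hadj
          simp only [Set.mem_compl_iff, ConnectedComponent.mem_supp_iff] at hy
          rcases fin2 (c s(u', y)) with he | he
          · exact hy (madj 0 hadj he).symm
          · have hyc : (colourGraph2 J c 1).connectedComponentMk y
                = (colourGraph2 J c 1).connectedComponentMk v' := by
              rcases hcover y with h | h
              · exact absurd h hy
              · exact h
            exact hb ((madj 1 hadj he).trans hyc)
      have hD3 : ((((colourGraph2 J c 1).connectedComponentMk v').suppᶜ.ncard : ℝ)) < b' := by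
        apply Ldef v'
        · intro y hy
          simp only [Set.mem_compl_iff, ConnectedComponent.mem_supp_iff] at hy
          have : v' ≠ y := by
            intro h
            exact hy (by rw [← h])
          exact hH0 hv' this
        · intro y hy hadj
          simp only [Set.mem_compl_iff, ConnectedComponent.mem_supp_iff] at hy
          rcases fin2 (c s(v', y)) with he | he
          · have hyc : (colourGraph2 J c 0).connectedComponentMk y
                = (colourGraph2 J c 0).connectedComponentMk u' := by
              rcases hcover y with h | h
              · exact h
              · exact absurd h hy
            exact hr ((madj 0 hadj he).trans hyc).symm
          · exact hy (madj 1 hadj he).symm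
      refine ⟨0, 1, by decide, (colourGraph2 J c 0).connectedComponentMk u',
        (colourGraph2 J c 1).connectedComponentMk v', ?_, Or.inr ⟨le_of_lt hD2, le_of_lt hD3⟩⟩
      ext x
      simp only [Set.mem_union, ConnectedComponent.mem_supp_iff, Set.mem_univ, iff_true]
      exact hcover x
    -- find a vertex of Z 0 inside P ∪ Q and conclude by `core`
    have hDu : (((hatH3 Z).neighborSet u \ J.neighborSet u).ncard : ℝ) < b' :=
      Ldef u _ (fun y hy => hy.1) (fun y hy => hy.2)
    have hDv : (((hatH3 Z).neighborSet v \ J.neighborSet v).ncard : ℝ) < b' :=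
      Ldef v _ (fun y hy => hy.1) (fun y hy => hy.2)
    have huv : u ≠ v := by
      intro h; exact hruv (by rw [h])
    have hfind : ∃ z' ∈ Z 0,
        ((colourGraph2 J c 0).connectedComponentMk z' = (colourGraph2 J c 0).connectedComponentMk u ∧
         (colourGraph2 J c 1).connectedComponentMk z' = (colourGraph2 J c 1).connectedComponentMk v) ∨
        ((colourGraph2 J c 0).connectedComponentMk z' = (colourGraph2 J c 0).connectedComponentMk v ∧
         (colourGraph2 J c 1).connectedComponentMk z' = (colourGraph2 J c 1).connectedComponentMk u) := by
      by_contra hnone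
      push_neg at hnone
      have hsubZ : Z 0 ⊆ ({u, v} : Set V) ∪ ((hatH3 Z).neighborSet u \ J.neighborSet u)
          ∪ ((hatH3 Z).neighborSet v \ J.neighborSet v) := by
        intro z hz
        refine hC1 u v hu hv hruv hbuv z ?_ ?_
        · intro hzP
          exact (hnone z hz).1 hzP.1 hzP.2
        · intro hzQ
          exact (hnone z hz).2 hzQ.1 hzQ.2
      have h1 : (Z 0).ncard ≤ (({u, v} : Set V) ∪ ((hatH3 Z).neighborSet u \ J.neighborSet u)
          ∪ ((hatH3 Z).neighborSet v \ J.neighborSet v)).ncard :=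
        Set.ncard_le_ncard hsubZ (Set.toFinite _)
      have h4 := Set.ncard_union_le (({u, v} : Set V)
          ∪ ((hatH3 Z).neighborSet u \ J.neighborSet u))
          ((hatH3 Z).neighborSet v \ J.neighborSet v)
      have h5 := Set.ncard_union_le ({u, v} : Set V)
          ((hatH3 Z).neighborSet u \ J.neighborSet u)
      have h6 : ({u, v} : Set V).ncard = 2 := Set.ncard_pair huv
      have h1' : ((Z 0).ncard : ℝ) ≤ ((({u, v} : Set V)
          ∪ ((hatH3 Z).neighborSet u \ J.neighborSet u)
          ∪ ((hatH3 Z).neighborSet v \ J.neighborSet v)).ncard : ℝ) := by exact_mod_cast h1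
      have h4' : (((({u, v} : Set V)
          ∪ ((hatH3 Z).neighborSet u \ J.neighborSet u)
          ∪ ((hatH3 Z).neighborSet v \ J.neighborSet v)).ncard) : ℝ)
          ≤ (((({u, v} : Set V)
          ∪ ((hatH3 Z).neighborSet u \ J.neighborSet u)).ncard) : ℝ)
          + (((hatH3 Z).neighborSet v \ J.neighborSet v).ncard : ℝ) := by exact_mod_cast h4
      have h5' : (((({u, v} : Set V)
          ∪ ((hatH3 Z).neighborSet u \ J.neighborSet u)).ncard) : ℝ)
          ≤ (({u, v} : Set V).ncard : ℝ)
          + (((hatH3 Z).neighborSet u \ J.neighborSet u).ncard : ℝ) := by exact_mod_cast h5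
      have h6' : (({u, v} : Set V).ncard : ℝ) = 2 := by exact_mod_cast h6
      have hZ0card : ((Z 0).ncard : ℝ) = (m 0 : ℝ) := by rw [hcard 0]
      linarith
    obtain ⟨z', hz', hz'PQ⟩ := hfind
    rcases hz'PQ with ⟨h1, h2⟩ | ⟨h1, h2⟩
    · exact core u v z' hu hv hruv hbuv hz' h1 h2
    · exact core v u z' hv hu (Ne.symm hruv) (Ne.symm hbuv) hz' h1 h2
  · -- CASE 2 : all of Z 0 lies in a single monochromatic component
    push_neg at hsplit
    have case2core : ∀ (i j : Fin 2), i ≠ j → ∀ z' ∈ Z 0,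
        (∀ x ∈ Z 0, (colourGraph2 J c i).connectedComponentMk x
          = (colourGraph2 J c i).connectedComponentMk z') →
        ∃ (i' j' : Fin 2), i' ≠ j' ∧
          ∃ (K₂ : (colourGraph2 J c i').ConnectedComponent)
            (K₃ : (colourGraph2 J c j').ConnectedComponent),
            K₂.supp ∪ K₃.supp = Set.univ ∧
            ((Z 0 ⊆ K₂.supp ∨ Z 0 ⊆ K₃.supp) ∨
              (((K₂.suppᶜ).ncard : ℝ) ≤ b' ∧ ((K₃.suppᶜ).ncard : ℝ) ≤ b')) := by
      intro i j hij z' hz' hZ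
      have htr : ∀ w : V, (colourGraph2 J c i).connectedComponentMk w
          ≠ (colourGraph2 J c i).connectedComponentMk z' →
          ((Z 0 \ ((colourGraph2 J c j).connectedComponentMk w).supp).ncard : ℝ) < b' := by
        intro w hw
        have hwZ0 : w ∉ Z 0 := fun h => hw (hZ w h)
        obtain ⟨k, hk⟩ := hpart w
        have hk0 : k ≠ 0 := fun h => hwZ0 (h ▸ hk)
        apply Ldef w _
        · intro z hz
          exact hHp hk hz.1 hk0 (fun h => hwZ0 (h ▸ hz.1))
        · intro z hz hadj
          have he : c s(w, z) = j := by
            refine fin2' i j _ hij (fun he => hw ?_)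
            exact (madj i hadj he).trans (hZ z hz.1)
          have hzsupp : z ∈ ((colourGraph2 J c j).connectedComponentMk w).supp := by
            simp only [ConnectedComponent.mem_supp_iff]
            exact (madj j hadj he).symm
          exact hz.2 hzsupp
      by_cases hout : ∀ w : V, (colourGraph2 J c i).connectedComponentMk w
          = (colourGraph2 J c i).connectedComponentMk z'
      · refine ⟨i, j, hij, (colourGraph2 J c i).connectedComponentMk z',
          (colourGraph2 J c j).connectedComponentMk z', ?_, Or.inl (Or.inl ?_)⟩
        · ext x
          simp only [Set.mem_union, ConnectedComponent.mem_supp_iff, Set.mem_univ, iff_true]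
          exact Or.inl (hout x)
        · intro x hx
          simp only [ConnectedComponent.mem_supp_iff]
          exact hZ x hx
      · push_neg at hout
        obtain ⟨w₁, hw₁⟩ := hout
        have huniq : ∀ w : V, (colourGraph2 J c i).connectedComponentMk w
            ≠ (colourGraph2 J c i).connectedComponentMk z' →
            (colourGraph2 J c j).connectedComponentMk w
            = (colourGraph2 J c j).connectedComponentMk w₁ := by
          intro w hw
          by_contra hne
          have hsub : Z 0 ⊆ (Z 0 \ ((colourGraph2 J c j).connectedComponentMk w).supp)
              ∪ (Z 0 \ ((colourGraph2 J c j).connectedComponentMk w₁).supp) := by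
            intro z hz
            by_cases h1 : z ∈ ((colourGraph2 J c j).connectedComponentMk w).supp
            · right
              refine ⟨hz, fun h2 => hne ?_⟩
              simp only [ConnectedComponent.mem_supp_iff] at h1 h2
              exact h1.symm.trans h2
            · exact Or.inl ⟨hz, h1⟩
          have h1 : (Z 0).ncard ≤ ((Z 0 \ ((colourGraph2 J c j).connectedComponentMk w).supp)
              ∪ (Z 0 \ ((colourGraph2 J c j).connectedComponentMk w₁).supp)).ncard :=
            Set.ncard_le_ncard hsub (Set.toFinite _)
          have h2 := Set.ncard_union_le
              (Z 0 \ ((colourGraph2 J c j).connectedComponentMk w).supp)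
              (Z 0 \ ((colourGraph2 J c j).connectedComponentMk w₁).supp)
          have h1' : ((Z 0).ncard : ℝ)
              ≤ (((Z 0 \ ((colourGraph2 J c j).connectedComponentMk w).supp)
              ∪ (Z 0 \ ((colourGraph2 J c j).connectedComponentMk w₁).supp)).ncard : ℝ) := by
            exact_mod_cast h1
          have h2' : (((Z 0 \ ((colourGraph2 J c j).connectedComponentMk w).supp)
              ∪ (Z 0 \ ((colourGraph2 J c j).connectedComponentMk w₁).supp)).ncard : ℝ)
              ≤ ((Z 0 \ ((colourGraph2 J c j).connectedComponentMk w).supp).ncard : ℝ)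
              + ((Z 0 \ ((colourGraph2 J c j).connectedComponentMk w₁).supp).ncard : ℝ) := by
            exact_mod_cast h2
          have hZ0card : ((Z 0).ncard : ℝ) = (m 0 : ℝ) := by rw [hcard 0]
          have htw := htr w hw
          have htw1 := htr w₁ hw₁
          linarith
        refine ⟨i, j, hij, (colourGraph2 J c i).connectedComponentMk z',
          (colourGraph2 J c j).connectedComponentMk w₁, ?_, Or.inl (Or.inl ?_)⟩
        · ext x
          simp only [Set.mem_union, ConnectedComponent.mem_supp_iff, Set.mem_univ, iff_true]
          by_cases hx : (colourGraph2 J c i).connectedComponentMk x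
              = (colourGraph2 J c i).connectedComponentMk z'
          · exact Or.inl hx
          · exact Or.inr (huniq x hx)
        · intro x hx
          simp only [ConnectedComponent.mem_supp_iff]
          exact hZ x hx
    by_cases hall : ∀ x ∈ Z 0, (colourGraph2 J c 0).connectedComponentMk x
        = (colourGraph2 J c 0).connectedComponentMk z₀
    · exact case2core 0 1 (by decide) z₀ hz₀ hall
    · push_neg at hall
      obtain ⟨a, ha, hane⟩ := hall
      have haz : (colourGraph2 J c 1).connectedComponentMk a
          = (colourGraph2 J c 1).connectedComponentMk z₀ := hsplit a ha z₀ hz₀ hane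
      have hba : ∀ x ∈ Z 0, (colourGraph2 J c 1).connectedComponentMk x
          = (colourGraph2 J c 1).connectedComponentMk a := by
        intro x hx
        by_contra hxa
        have h1 : (colourGraph2 J c 0).connectedComponentMk x
            = (colourGraph2 J c 0).connectedComponentMk a := by
          by_contra h
          exact hxa (hsplit x hx a ha h)
        have h2 : (colourGraph2 J c 0).connectedComponentMk x
            = (colourGraph2 J c 0).connectedComponentMk z₀ := by
          by_contra h
          exact hxa ((hsplit x hx z₀ hz₀ h).trans haz.symm)
        exact hane (h1.symm.trans h2)
      exact case2core 1 0 (by decide) a ha hba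
end
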